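/- Let d ≥ 1, α ∈ ℝ, and let V : ℝ^d → ℝ be twice continuously differentiable with ∇²V(x) ⪰ α I_d for all x, with V and ∇V of at most polynomial growth and e^{−V} integrable; let π be the probability measure with density e^{−V}/Z. Fix m₀, m₁ ∈ ℝ^d and ε₀, ε₁ > 0, and for t ∈ [0,1] set m_t = (1−t)m₀ + t m₁ and ε_t = ((1−t)√ε₀ + t√ε₁)². Then the function f(t) = KL(N(m_t, ε_t I_d) | π) satisfies, for all t ∈ [0,1]: f(t) ≤ (1−t) f(0) + t f(1) − (α/2) t(1−t) ( ‖m₀ − m₁‖² + d (√ε₀ − √ε₁)² ). -/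

import Mathlib

open MeasureTheory Real
open scoped RealInnerProductSpace

/-- Density of the isotropic Gaussian `N(m, ε I_d)` on `ℝ^d`. -/
noncomputable def gaussPDF (d : ℕ) (m : EuclideanSpace ℝ (Fin d)) (ε : ℝ)
    (x : EuclideanSpace ℝ (Fin d)) : ℝ :=
  (2 * Real.pi * ε) ^ (-(d : ℝ) / 2) * Real.exp (-‖x - m‖ ^ 2 / (2 * ε))

/-- (reverse) KL divergence between probability densities on `ℝ^d`. -/
noncomputable def klDensity (d : ℕ) (f g : EuclideanSpace ℝ (Fin d) → ℝ) : ℝ :=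
  ∫ x, f x * Real.log (f x / g x)

open Set

namespace KLAux
variable {d : ℕ}
local notation "E" => EuclideanSpace ℝ (Fin d)

lemma pow_div_factorial_le_exp {x : ℝ} (hx : 0 ≤ x) (k : ℕ) :
    x ^ k / k.factorial ≤ Real.exp x := by
  calc x ^ k / k.factorial ≤ ∑ i ∈ Finset.range (k+1), x ^ i / i.factorial := by
        refine Finset.single_le_sum (f := fun i => x ^ i / i.factorial) ?_
          (Finset.self_mem_range_succ k)
        intro i _; positivity
    _ ≤ Real.exp x := Real.sum_le_exp_of_nonneg hx _

lemma poly_le_exp (k : ℕ) {b r : ℝ} (hb : 0 < b) (hr : 0 ≤ r) :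
    (1 + r) ^ k ≤ (2 / b) ^ k * k.factorial * Real.exp b * Real.exp (b * r ^ 2) := by
  have h1 : (1 + r) ^ k ≤ (2 * (1 + r ^ 2)) ^ k := by
    apply pow_le_pow_left₀ (by positivity)
    nlinarith [sq_nonneg (1 - r)]
  have h2 : (b * (1 + r ^ 2)) ^ k / k.factorial ≤ Real.exp (b * (1 + r ^ 2)) :=
    pow_div_factorial_le_exp (by positivity) k
  have h3 : Real.exp (b * (1 + r ^ 2)) = Real.exp b * Real.exp (b * r ^ 2) := by
    rw [← Real.exp_add]; ring_nf
  have hfact : (0 : ℝ) < k.factorial := by positivity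
  have h4 : (1 + r ^ 2) ^ k ≤ k.factorial / b ^ k * (Real.exp b * Real.exp (b * r ^ 2)) := by
    rw [← h3]
    have := (div_le_iff₀ hfact).mp h2
    rw [mul_pow] at this
    have hbk : (0 : ℝ) < b ^ k := by positivity
    rw [div_mul_eq_mul_div, le_div_iff₀ hbk]
    calc (1 + r ^ 2) ^ k * b ^ k = b ^ k * (1 + r ^ 2) ^ k := by ring
      _ ≤ Real.exp (b * (1 + r ^ 2)) * k.factorial := this
      _ = k.factorial * Real.exp (b * (1 + r ^ 2)) := by ring
  calc (1 + r) ^ k ≤ (2 * (1 + r ^ 2)) ^ k := h1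
    _ = 2 ^ k * (1 + r ^ 2) ^ k := by rw [mul_pow]
    _ ≤ 2 ^ k * (k.factorial / b ^ k * (Real.exp b * Real.exp (b * r ^ 2))) := by
        apply mul_le_mul_of_nonneg_left h4 (by positivity)
    _ = (2 / b) ^ k * k.factorial * Real.exp b * Real.exp (b * r ^ 2) := by
        rw [div_pow]; ring

lemma integrable_gauss {b : ℝ} (hb : 0 < b) :
    Integrable (fun z : E => Real.exp (-b * ‖z‖ ^ 2)) := by
  have h := (GaussianFourier.integrable_cexp_neg_mul_sq_norm_add
    (V := E) (b := (b : ℂ)) (by simpa using hb) 0 0).norm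
  refine h.congr (Filter.Eventually.of_forall fun z => ?_)
  simp [Complex.norm_exp]
  left
  norm_cast

lemma integrable_poly_gauss (k : ℕ) {b : ℝ} (hb : 0 < b) :
    Integrable (fun z : E => (1 + ‖z‖) ^ k * Real.exp (-b * ‖z‖ ^ 2)) := by
  have hb2 : 0 < b / 2 := by positivity
  set K : ℝ := (2 / (b/2)) ^ k * k.factorial * Real.exp (b/2) with hK
  have hKpos : 0 < K := by positivity
  refine ((integrable_gauss (d := d) hb2).const_mul K).mono' ?_
    (Filter.Eventually.of_forall fun z => ?_)
  · exact (Continuous.mul (by continuity) (by continuity)).aestronglyMeasurable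
  · have h1 : (1 + ‖z‖) ^ k ≤ K * Real.exp ((b/2) * ‖z‖ ^ 2) := by
      simpa [hK, mul_assoc] using poly_le_exp k hb2 (norm_nonneg z)
    have hexp : Real.exp ((b/2) * ‖z‖^2) * Real.exp (-b * ‖z‖^2)
        = Real.exp (-(b/2) * ‖z‖^2) := by
      rw [← Real.exp_add]; ring_nf
    have h2 : (0:ℝ) ≤ (1 + ‖z‖) ^ k := by positivity
    rw [Real.norm_eq_abs, abs_of_nonneg (by positivity)]
    calc (1 + ‖z‖) ^ k * Real.exp (-b * ‖z‖ ^ 2)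
        ≤ (K * Real.exp ((b/2) * ‖z‖^2)) * Real.exp (-b * ‖z‖^2) := by
          apply mul_le_mul_of_nonneg_right h1 (Real.exp_pos _).le
      _ = K * Real.exp (-(b/2) * ‖z‖ ^ 2) := by rw [mul_assoc, hexp]

lemma integral_gauss_val :
    ∫ z : E, Real.exp (-(1/2) * ‖z‖ ^ 2) = (2 * π) ^ ((d : ℝ) / 2) := by
  have h := GaussianFourier.integral_rexp_neg_mul_sq_norm (V := E) (b := 1/2) (by norm_num)
  rw [finrank_euclideanSpace_fin] at h
  rw [h]
  congr 1; ring

lemma integral_gauss_inner (a : E) :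
    ∫ z : E, Real.exp (-(1/2) * ‖z‖ ^ 2) * ⟪a, z⟫ = 0 := by
  have h := integral_neg_eq_self (fun z : E => Real.exp (-(1/2) * ‖z‖ ^ 2) * ⟪a, z⟫) volume
  have h2 : ∫ z : E, Real.exp (-(1/2) * ‖-z‖ ^ 2) * ⟪a, -z⟫
      = - ∫ z : E, Real.exp (-(1/2) * ‖z‖ ^ 2) * ⟪a, z⟫ := by
    rw [← integral_neg]
    congr 1; ext z
    simp [inner_neg_right, norm_neg]
  rw [h2] at h
  linarith [h]

lemma integral_shift_scale (m : E) {s : ℝ} (hs : 0 < s) (F : E → ℝ) :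
    ∫ x : E, F x = s ^ d * ∫ z : E, F (m + s • z) := by
  have h1 := MeasureTheory.Measure.integral_comp_smul (μ := (volume : Measure E))
    (fun x => F (m + x)) s
  rw [finrank_euclideanSpace_fin] at h1
  have h2 : ∫ x : E, F (m + x) = ∫ x : E, F x := integral_add_left_eq_self F m
  rw [h2] at h1
  rw [h1, smul_eq_mul, abs_of_nonneg (by positivity), ← mul_assoc,
    mul_inv_cancel₀ (by positivity), one_mul]

lemma integral_gauss_sq (hd : 1 ≤ d) :
    ∫ z : E, ‖z‖ ^ 2 * Real.exp (-(1/2) * ‖z‖ ^ 2)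
      = d * ∫ z : E, Real.exp (-(1/2) * ‖z‖ ^ 2) := by
  have hdpos : 0 < d := hd
  have hdR : (1:ℝ) ≤ (d:ℝ) := by exact_mod_cast hd
  haveI : Nontrivial E := Module.nontrivial_of_finrank_pos (R := ℝ)
    (by rw [finrank_euclideanSpace_fin]; exact hdpos)
  have h₂ := MeasureTheory.integral_fun_norm_addHaar (volume : Measure E)
    (fun y => y ^ 2 * Real.exp (-(1/2) * y ^ 2))
  have h₀ := MeasureTheory.integral_fun_norm_addHaar (volume : Measure E)
    (fun y => Real.exp (-(1/2) * y ^ 2))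
  rw [finrank_euclideanSpace_fin] at h₂ h₀
  have e₂ : ∫ y in Ioi (0:ℝ), y ^ (d - 1) • (y ^ 2 * Real.exp (-(1/2) * y ^ 2))
      = (1/2 : ℝ) ^ (-((d:ℝ)+1+1)/2) * (1/2) * Real.Gamma (((d:ℝ)+1+1)/2) := by
    rw [← integral_rpow_mul_exp_neg_mul_rpow (p := 2) (q := (d:ℝ)+1)
      (by norm_num) (by linarith) (by norm_num : (0:ℝ) < 1/2)]
    refine setIntegral_congr_fun measurableSet_Ioi (fun y hy => ?_)
    have hy0 : (0:ℝ) < y := hy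
    have hy2 : y ^ ((2:ℝ)) = y ^ (2:ℕ) := by
      rw [← Real.rpow_natCast y 2]; norm_num
    rw [smul_eq_mul, hy2, ← Real.rpow_natCast y (d-1), ← Real.rpow_natCast y 2,
      ← mul_assoc, ← Real.rpow_add hy0]
    congr 2
    push_cast [Nat.cast_sub hd]; ring
  have e₀ : ∫ y in Ioi (0:ℝ), y ^ (d - 1) • Real.exp (-(1/2) * y ^ 2)
      = (1/2 : ℝ) ^ (-((d:ℝ)-1+1)/2) * (1/2) * Real.Gamma (((d:ℝ)-1+1)/2) := by
    rw [← integral_rpow_mul_exp_neg_mul_rpow (p := 2) (q := (d:ℝ)-1)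
      (by norm_num) (by linarith) (by norm_num : (0:ℝ) < 1/2)]
    refine setIntegral_congr_fun measurableSet_Ioi (fun y hy => ?_)
    have hy0 : (0:ℝ) < y := hy
    have hy2 : y ^ ((2:ℝ)) = y ^ (2:ℕ) := by
      rw [← Real.rpow_natCast y 2]; norm_num
    rw [smul_eq_mul, hy2, ← Real.rpow_natCast y (d-1)]
    congr 2
    push_cast [Nat.cast_sub hd]; ring
  have key : (1/2 : ℝ) ^ (-((d:ℝ)+1+1)/2) * (1/2) * Real.Gamma (((d:ℝ)+1+1)/2)
      = d * ((1/2 : ℝ) ^ (-((d:ℝ)-1+1)/2) * (1/2) * Real.Gamma (((d:ℝ)-1+1)/2)) := by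
    have hG : Real.Gamma (((d:ℝ)+1+1)/2) = ((d:ℝ)/2) * Real.Gamma ((d:ℝ)/2) := by
      rw [show ((d:ℝ)+1+1)/2 = (d:ℝ)/2 + 1 from by ring, Real.Gamma_add_one (by positivity)]
    have hr : (1/2 : ℝ) ^ (-((d:ℝ)+1+1)/2)
        = (1/2 : ℝ) ^ (-((d:ℝ)-1+1)/2) * 2 := by
      rw [show -((d:ℝ)+1+1)/2 = -((d:ℝ)-1+1)/2 + (-1) from by ring,
        Real.rpow_add (by norm_num), Real.rpow_neg_one]
      norm_num
    rw [hG, hr, show ((d:ℝ)-1+1)/2 = (d:ℝ)/2 from by ring]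
    ring
  rw [h₂, h₀, e₂, e₀, key]
  push_cast
  rw [nsmul_eq_mul, nsmul_eq_mul, smul_eq_mul, smul_eq_mul]
  ring

set_option maxHeartbeats 1000000 in
lemma strong_convex {α : ℝ} {V : E → ℝ} (hV : ContDiff ℝ 2 V)
    (hHess : ∀ x v : E, α * ‖v‖ ^ 2 ≤ ⟪v, (fderiv ℝ (gradient V) x) v⟫)
    (x u : E) {t : ℝ} (ht0 : 0 ≤ t) (ht1 : t ≤ 1) :
    V (x + t • u) ≤ (1 - t) * V x + t * V (x + u) - (α / 2) * t * (1 - t) * ‖u‖ ^ 2 := by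
  have hVd : Differentiable ℝ V := hV.differentiable two_ne_zero
  have hg : ContDiff ℝ 1 (gradient V) := by
    have h1 : ContDiff ℝ 1 (fderiv ℝ V) := hV.fderiv_right (by norm_num)
    exact ((InnerProductSpace.toDual ℝ E).symm.contDiff).comp h1
  have hgd : Differentiable ℝ (gradient V) := hg.differentiable one_ne_zero
  have hinner : ∀ (y v : E), ⟪gradient V y, v⟫ = fderiv ℝ V y v := fun y v =>
    InnerProductSpace.toDual_symm_apply
  set c : ℝ → E := fun τ => x + τ • u with hc_def
  have hc : ∀ τ : ℝ, HasDerivAt c u τ := by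
    intro τ
    have h1 : HasDerivAt (fun τ : ℝ => τ • u) ((1:ℝ) • u) τ :=
      (hasDerivAt_id τ).smul_const u
    simpa [hc_def] using h1.const_add x
  have hφ' : ∀ τ : ℝ, HasDerivAt (fun τ => V (c τ)) ⟪gradient V (c τ), u⟫ τ := by
    intro τ
    have := ((hVd (c τ)).hasFDerivAt).comp_hasDerivAt τ (hc τ)
    rw [hinner]
    exact this
  have hφ'' : ∀ τ : ℝ, HasDerivAt (fun τ => ⟪gradient V (c τ), u⟫)
      ⟪(fderiv ℝ (gradient V) (c τ)) u, u⟫ τ := by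
    intro τ
    have hgc : HasDerivAt (fun τ => gradient V (c τ))
        ((fderiv ℝ (gradient V) (c τ)) u) τ :=
      ((hgd (c τ)).hasFDerivAt).comp_hasDerivAt τ (hc τ)
    have := HasDerivAt.inner ℝ hgc (hasDerivAt_const τ u)
    simpa using this
  set g : ℝ → ℝ := fun τ => V (c τ) - α / 2 * ‖u‖ ^ 2 * τ ^ 2 with hg_def
  have hq : ∀ τ : ℝ, HasDerivAt (fun τ : ℝ => α / 2 * ‖u‖ ^ 2 * τ ^ 2)
      (α * ‖u‖ ^ 2 * τ) τ := by
    intro τ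
    have := (hasDerivAt_pow 2 τ).const_mul (α / 2 * ‖u‖ ^ 2)
    exact this.congr_deriv (by push_cast; ring)
  have hg' : ∀ τ : ℝ, HasDerivAt g (⟪gradient V (c τ), u⟫ - α * ‖u‖ ^ 2 * τ) τ :=
    fun τ => (hφ' τ).sub (hq τ)
  have hderiv : deriv g = fun τ => ⟪gradient V (c τ), u⟫ - α * ‖u‖ ^ 2 * τ :=
    funext fun τ => (hg' τ).deriv
  have hg'' : ∀ τ : ℝ, HasDerivAt (deriv g)
      (⟪(fderiv ℝ (gradient V) (c τ)) u, u⟫ - α * ‖u‖ ^ 2) τ := by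
    intro τ
    rw [hderiv]
    exact (hφ'' τ).sub (by simpa using (hasDerivAt_id τ).const_mul (α * ‖u‖ ^ 2))
  have hcvx : ConvexOn ℝ Set.univ g := by
    apply convexOn_of_deriv2_nonneg convex_univ
    · have hccont : Continuous c := continuous_const.add (continuous_id.smul continuous_const)
      exact ((hV.continuous.comp hccont).sub
        ((continuous_const.mul (continuous_pow 2)))).continuousOn
    · intro τ _
      exact (hg' τ).differentiableAt.differentiableWithinAt
    · intro τ _
      exact (hg'' τ).differentiableAt.differentiableWithinAt
    · intro τ _
      have h2 : deriv^[2] g τ = ⟪(fderiv ℝ (gradient V) (c τ)) u, u⟫ - α * ‖u‖ ^ 2 := by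
        simp only [Function.iterate_succ, Function.iterate_zero, Function.comp, id]
        exact (hg'' τ).deriv
      rw [h2, sub_nonneg, real_inner_comm]
      exact hHess (c τ) u
  have key := hcvx.2 (Set.mem_univ (0:ℝ)) (Set.mem_univ (1:ℝ))
    (by linarith : (0:ℝ) ≤ 1 - t) ht0 (by ring)
  have e0 : (1 - t) • (0:ℝ) + t • (1:ℝ) = t := by simp
  rw [e0] at key
  have hgt : g t = V (x + t • u) - α / 2 * ‖u‖ ^ 2 * t ^ 2 := rfl
  have hg0 : g 0 = V x := by simp [hg_def, hc_def]
  have hg1 : g 1 = V (x + u) - α / 2 * ‖u‖ ^ 2 := by simp [hg_def, hc_def]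
  rw [hgt, hg0, hg1, smul_eq_mul, smul_eq_mul] at key
  nlinarith [key]
lemma integrable_gauss_sq' :
    Integrable (fun z : E => Real.exp (-(1/2) * ‖z‖ ^ 2) * ‖z‖ ^ 2) := by
  refine (integrable_poly_gauss (d := d) 2 (by norm_num : (0:ℝ) < 1/2)).mono'
    ((Real.continuous_exp.comp (by continuity)).mul (by continuity)).aestronglyMeasurable
    (Filter.Eventually.of_forall fun z => ?_)
  rw [Real.norm_eq_abs, abs_of_nonneg (by positivity), mul_comm]
  apply mul_le_mul_of_nonneg_right _ (Real.exp_pos _).le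
  nlinarith [norm_nonneg z]

set_option maxHeartbeats 1000000 in
lemma integrable_gauss_poly_fun {G : E → ℝ} (hG : Continuous G)
    {C : ℝ} {k : ℕ} (hbound : ∀ x, |G x| ≤ C * (1 + ‖x‖) ^ k) (m : E) (s : ℝ) :
    Integrable (fun z : E => Real.exp (-(1/2) * ‖z‖ ^ 2) * G (m + s • z)) := by
  have hC : ∀ x, |G x| ≤ |C| * (1 + ‖x‖) ^ k := fun x =>
    (hbound x).trans (mul_le_mul_of_nonneg_right (le_abs_self C) (by positivity))
  set D : ℝ := |C| * (1 + ‖m‖ + |s|) ^ k with hD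
  have key : ∀ z : E, |G (m + s • z)| ≤ D * (1 + ‖z‖) ^ k := by
    intro z
    refine (hC _).trans ?_
    rw [hD, mul_assoc]
    apply mul_le_mul_of_nonneg_left _ (abs_nonneg C)
    rw [← mul_pow]
    apply pow_le_pow_left₀ (by positivity)
    have h1 : ‖m + s • z‖ ≤ ‖m‖ + |s| * ‖z‖ := by
      refine (norm_add_le _ _).trans ?_
      rw [norm_smul, Real.norm_eq_abs]
    nlinarith [norm_nonneg z, norm_nonneg m, abs_nonneg s]
  refine ((integrable_poly_gauss (d := d) k (by norm_num : (0:ℝ) < 1/2)).const_mul D).mono'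
    (by fun_prop : Continuous (fun z : E =>
      Real.exp (-(1/2) * ‖z‖ ^ 2) * G (m + s • z))).aestronglyMeasurable
    (Filter.Eventually.of_forall fun z => ?_)
  rw [Real.norm_eq_abs, abs_mul, abs_of_nonneg (Real.exp_pos _).le]
  calc Real.exp (-(1/2) * ‖z‖^2) * |G (m + s • z)|
      ≤ Real.exp (-(1/2) * ‖z‖^2) * (D * (1 + ‖z‖) ^ k) :=
        mul_le_mul_of_nonneg_left (key z) (Real.exp_pos _).le
    _ = D * ((1 + ‖z‖) ^ k * Real.exp (-(1/2) * ‖z‖ ^ 2)) := by ring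

lemma integrable_gauss_inner_fun (a : E) :
    Integrable (fun z : E => Real.exp (-(1/2) * ‖z‖ ^ 2) * ⟪a, z⟫) := by
  refine ((integrable_poly_gauss (d := d) 1 (by norm_num : (0:ℝ) < 1/2)).const_mul ‖a‖).mono'
    ((Real.continuous_exp.comp (by continuity)).mul
      (continuous_const.inner continuous_id)).aestronglyMeasurable
    (Filter.Eventually.of_forall fun z => ?_)
  rw [Real.norm_eq_abs, abs_mul, abs_of_nonneg (Real.exp_pos _).le]
  calc Real.exp (-(1/2) * ‖z‖^2) * |⟪a, z⟫|
      ≤ Real.exp (-(1/2) * ‖z‖^2) * (‖a‖ * (1 + ‖z‖) ^ 1) := by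
        apply mul_le_mul_of_nonneg_left _ (Real.exp_pos _).le
        calc |⟪a, z⟫| ≤ ‖a‖ * ‖z‖ := abs_real_inner_le_norm a z
          _ ≤ ‖a‖ * (1 + ‖z‖) ^ 1 := by
              apply mul_le_mul_of_nonneg_left _ (norm_nonneg a)
              rw [pow_one]; linarith [norm_nonneg z]
    _ = ‖a‖ * ((1 + ‖z‖) ^ 1 * Real.exp (-(1/2) * ‖z‖ ^ 2)) := by ring

lemma kl_formula (hd : 1 ≤ d) {V : E → ℝ} (hVc : Continuous V)
    {C : ℝ} {k : ℕ} (hbound : ∀ x, |V x| ≤ C * (1 + ‖x‖) ^ k)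
    (πd : E → ℝ) (hZ : 0 < ∫ y : E, Real.exp (-V y))
    (hπd : ∀ x, πd x = Real.exp (-V x) / ∫ y : E, Real.exp (-V y))
    (m : E) {s : ℝ} (hs : 0 < s) :
    klDensity d (gaussPDF d m (s ^ 2)) πd
      = -((d:ℝ)/2) * Real.log (2 * π) - (d:ℝ) * Real.log s
        + (Real.log (∫ y : E, Real.exp (-V y)) - (d:ℝ)/2)
        + (2 * π) ^ (-(d:ℝ)/2) *
          ∫ z : E, Real.exp (-(1/2) * ‖z‖ ^ 2) * V (m + s • z) := by
  set Z : ℝ := ∫ y : E, Real.exp (-V y) with hZdef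
  set c : ℝ := (2 * π * s ^ 2) ^ (-(d:ℝ)/2) with hcdef
  have hc : 0 < c := by rw [hcdef]; positivity
  set γ : E → ℝ := fun z => Real.exp (-(1/2) * ‖z‖ ^ 2) with hγdef
  set K₁ : ℝ := (-((d:ℝ)/2)) * Real.log (2 * π * s ^ 2) + Real.log Z with hK₁
  have hpt : ∀ z : E, gaussPDF d m (s^2) (m + s•z) *
      Real.log (gaussPDF d m (s^2) (m + s•z) / πd (m + s•z))
      = c * (γ z * (K₁ + (-(1/2) * ‖z‖^2) + V (m + s•z))) := by
    intro z
    have hnorm : ‖(m + s•z) - m‖^2 = s^2 * ‖z‖^2 := by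
      rw [add_sub_cancel_left, norm_smul, Real.norm_eq_abs, mul_pow, sq_abs]
    have hgp : gaussPDF d m (s^2) (m + s•z) = c * γ z := by
      rw [gaussPDF, hγdef]
      congr 1
      rw [hnorm]
      field_simp
    rw [hgp, hπd]
    have hγz : (0:ℝ) < γ z := Real.exp_pos _
    have hlog : Real.log ((c * γ z) / (Real.exp (-(V (m+s•z))) / Z))
        = Real.log c + (-(1/2) * ‖z‖^2) + V (m+s•z) + Real.log Z := by
      rw [Real.log_div (by positivity) (by positivity),
        Real.log_mul (ne_of_gt hc) (ne_of_gt hγz), hγdef, Real.log_exp,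
        Real.log_div (Real.exp_ne_zero _) (ne_of_gt hZ), Real.log_exp]
      ring
    rw [hlog]
    have hlogc : Real.log c = -(d:ℝ)/2 * Real.log (2*π*s^2) :=
      Real.log_rpow (by positivity) _
    rw [hlogc, hK₁]
    ring
  have hγint : Integrable γ := integrable_gauss (d := d) (by norm_num : (0:ℝ) < 1/2)
  have hγsq : Integrable (fun z : E => γ z * ‖z‖^2) := integrable_gauss_sq'
  have hγV : Integrable (fun z : E => γ z * V (m + s • z)) :=
    integrable_gauss_poly_fun hVc hbound m s
  have hN : ∫ z : E, γ z = (2 * π) ^ ((d:ℝ)/2) := integral_gauss_val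
  have hsqval : ∫ z : E, γ z * ‖z‖^2 = (d:ℝ) * ∫ z : E, γ z := by
    rw [show ∫ z : E, γ z * ‖z‖^2 = ∫ z : E, ‖z‖^2 * γ z from
      integral_congr_ae (Filter.Eventually.of_forall fun z => mul_comm _ _)]
    exact integral_gauss_sq hd
  calc klDensity d (gaussPDF d m (s^2)) πd
      = s ^ d * ∫ z : E, gaussPDF d m (s^2) (m + s•z) *
          Real.log (gaussPDF d m (s^2) (m + s•z) / πd (m + s•z)) := by
        rw [klDensity]
        exact integral_shift_scale m hs _
    _ = s ^ d * ∫ z : E, c * (γ z * (K₁ + (-(1/2) * ‖z‖^2) + V (m + s•z))) := by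
        congr 1
        exact integral_congr_ae (Filter.Eventually.of_forall hpt)
    _ = (s ^ d * c) * ∫ z : E, (K₁ * γ z + (-(1/2)) * (γ z * ‖z‖^2) + γ z * V (m + s•z)) := by
        rw [integral_const_mul]
        rw [show (fun z : E => γ z * (K₁ + (-(1/2) * ‖z‖^2) + V (m + s•z)))
          = fun z : E => K₁ * γ z + (-(1/2)) * (γ z * ‖z‖^2) + γ z * V (m + s•z) from
          funext fun z => by ring]
        ring
    _ = (s ^ d * c) * (K₁ * (∫ z : E, γ z) + (-(1/2)) * ((d:ℝ) * ∫ z : E, γ z)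
          + ∫ z : E, γ z * V (m + s•z)) := by
        have e1 : ∫ z : E, (K₁ * γ z + (-(1/2)) * (γ z * ‖z‖^2) + γ z * V (m + s•z))
            = (∫ z : E, (K₁ * γ z + (-(1/2)) * (γ z * ‖z‖^2)))
              + ∫ z : E, γ z * V (m + s•z) :=
          integral_add ((hγint.const_mul K₁).add (hγsq.const_mul (-(1/2)))) hγV
        have e2 : ∫ z : E, (K₁ * γ z + (-(1/2)) * (γ z * ‖z‖^2))
            = (∫ z : E, K₁ * γ z) + ∫ z : E, (-(1/2)) * (γ z * ‖z‖^2) :=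
          integral_add (hγint.const_mul K₁) (hγsq.const_mul (-(1/2)))
        rw [e1, e2, integral_const_mul, integral_const_mul, hsqval]
    _ = -((d:ℝ)/2) * Real.log (2 * π) - (d:ℝ) * Real.log s + (Real.log Z - (d:ℝ)/2)
          + (2 * π) ^ (-(d:ℝ)/2) * ∫ z : E, γ z * V (m + s • z) := by
        have hsc : (s:ℝ) ^ d * c = (2*π) ^ (-(d:ℝ)/2) := by
          rw [hcdef, Real.mul_rpow (by positivity) (by positivity),
            ← Real.rpow_natCast s 2, ← Real.rpow_mul hs.le,
            ← Real.rpow_natCast s d, mul_comm ((2*π) ^ (-(d:ℝ)/2)) _, ← mul_assoc,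
            ← Real.rpow_add hs, show ((d:ℝ) + ((2:ℕ):ℝ) * (-(d:ℝ)/2)) = 0 from by
              push_cast; ring,
            Real.rpow_zero, one_mul]
        have hAN : (2*π) ^ (-(d:ℝ)/2) * (2*π) ^ ((d:ℝ)/2) = 1 := by
          rw [← Real.rpow_add (by positivity),
            show -(d:ℝ)/2 + (d:ℝ)/2 = 0 from by ring, Real.rpow_zero]
        rw [hsc, hN]
        have hK₁' : K₁ = -((d:ℝ)/2) * (Real.log (2*π) + 2 * Real.log s) + Real.log Z := by
          rw [hK₁, Real.log_mul (by positivity) (by positivity), Real.log_pow]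
          push_cast
          ring
        rw [hK₁']
        linear_combination (-((d:ℝ)/2) * (Real.log (2*π) + 2 * Real.log s) + Real.log Z
          - (d:ℝ)/2) * hAN

end KLAux

open KLAux

set_option maxHeartbeats 2000000 in
/-- `α`-geodesic-convexity of `KL(·|π)` along Bures–Wasserstein geodesics of isotropic
Gaussians, when `∇²V ⪰ α I_d`: along the geodesic `t ↦ N(m_t, ε_t I_d)` with
`m_t = (1−t)m₀ + t m₁` and `ε_t = ((1−t)√ε₀ + t√ε₁)²`,
`f(t) ≤ (1−t)f(0) + t f(1) − (α/2) t(1−t)(‖m₀−m₁‖² + d(√ε₀−√ε₁)²)`. -/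
theorem kl_geodesically_convex_isotropic_gaussians
    (d : ℕ) (hd : 1 ≤ d) (α : ℝ)
    (V : EuclideanSpace ℝ (Fin d) → ℝ)
    (hV : ContDiff ℝ 2 V)
    (hHess : ∀ x v : EuclideanSpace ℝ (Fin d),
      α * ‖v‖ ^ 2 ≤ ⟪v, (fderiv ℝ (gradient V) x) v⟫)
    (hVgrowth : ∃ (C : ℝ) (k : ℕ), ∀ x, |V x| ≤ C * (1 + ‖x‖) ^ k)
    (hgradVgrowth : ∃ (C : ℝ) (k : ℕ), ∀ x, ‖gradient V x‖ ≤ C * (1 + ‖x‖) ^ k)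
    (hint : Integrable (fun x => Real.exp (-V x)))
    (πd : EuclideanSpace ℝ (Fin d) → ℝ)
    (hπd : ∀ x, πd x = Real.exp (-V x) / ∫ y, Real.exp (-V y))
    (m₀ m₁ : EuclideanSpace ℝ (Fin d)) (ε₀ ε₁ : ℝ) (hε₀ : 0 < ε₀) (hε₁ : 0 < ε₁)
    (f : ℝ → ℝ)
    (hf : ∀ t, f t = klDensity d
      (gaussPDF d ((1 - t) • m₀ + t • m₁) (((1 - t) * Real.sqrt ε₀ + t * Real.sqrt ε₁) ^ 2)) πd) :
    ∀ t ∈ Set.Icc (0 : ℝ) 1,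
      f t ≤ (1 - t) * f 0 + t * f 1 -
        (α / 2) * t * (1 - t) *
          (‖m₀ - m₁‖ ^ 2 + (d : ℝ) * (Real.sqrt ε₀ - Real.sqrt ε₁) ^ 2) := by
  rintro t ⟨ht0, ht1⟩
  obtain ⟨C, k, hbound⟩ := hVgrowth
  have hVc : Continuous V := hV.continuous
  set s₀ : ℝ := Real.sqrt ε₀ with hs₀def
  set s₁ : ℝ := Real.sqrt ε₁ with hs₁def
  have hs₀ : 0 < s₀ := Real.sqrt_pos.2 hε₀
  have hs₁ : 0 < s₁ := Real.sqrt_pos.2 hε₁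
  have hst : 0 < (1 - t) * s₀ + t * s₁ := by
    rcases lt_or_ge t 1 with h | h
    · nlinarith [mul_nonneg ht0 hs₁.le]
    · have ht1' : t = 1 := le_antisymm ht1 h
      rw [ht1']; simpa using hs₁
  -- positivity of the normalization constant
  have hZ : 0 < ∫ y : EuclideanSpace ℝ (Fin d), Real.exp (-V y) := by
    refine (integral_pos_iff_support_of_nonneg (fun y => (Real.exp_pos _).le) hint).2 ?_
    have hsupp : (Function.support fun y : EuclideanSpace ℝ (Fin d) => Real.exp (-V y))
        = Set.univ := Set.eq_univ_of_forall fun y => Function.mem_support.2 (Real.exp_ne_zero _)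
    rw [hsupp]
    exact isOpen_univ.measure_pos volume ⟨0, trivial⟩
  -- rewrite the three values of f via the formula
  have hft : f t = -((d:ℝ)/2) * Real.log (2 * π) - (d:ℝ) * Real.log ((1 - t) * s₀ + t * s₁)
      + (Real.log (∫ y : EuclideanSpace ℝ (Fin d), Real.exp (-V y)) - (d:ℝ)/2)
      + (2 * π) ^ (-(d:ℝ)/2) * ∫ z : EuclideanSpace ℝ (Fin d),
          Real.exp (-(1/2) * ‖z‖ ^ 2) * V (((1 - t) • m₀ + t • m₁) + ((1 - t) * s₀ + t * s₁) • z) := by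
    rw [hf t]
    exact kl_formula hd hVc hbound πd hZ hπd _ hst
  have hf0 : f 0 = -((d:ℝ)/2) * Real.log (2 * π) - (d:ℝ) * Real.log s₀
      + (Real.log (∫ y : EuclideanSpace ℝ (Fin d), Real.exp (-V y)) - (d:ℝ)/2)
      + (2 * π) ^ (-(d:ℝ)/2) * ∫ z : EuclideanSpace ℝ (Fin d),
          Real.exp (-(1/2) * ‖z‖ ^ 2) * V (m₀ + s₀ • z) := by
    have h0 : f 0 = klDensity d (gaussPDF d m₀ (s₀ ^ 2)) πd := by
      rw [hf 0]
      norm_num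
    rw [h0]
    exact kl_formula hd hVc hbound πd hZ hπd m₀ hs₀
  have hf1 : f 1 = -((d:ℝ)/2) * Real.log (2 * π) - (d:ℝ) * Real.log s₁
      + (Real.log (∫ y : EuclideanSpace ℝ (Fin d), Real.exp (-V y)) - (d:ℝ)/2)
      + (2 * π) ^ (-(d:ℝ)/2) * ∫ z : EuclideanSpace ℝ (Fin d),
          Real.exp (-(1/2) * ‖z‖ ^ 2) * V (m₁ + s₁ • z) := by
    have h1 : f 1 = klDensity d (gaussPDF d m₁ (s₁ ^ 2)) πd := by
      rw [hf 1]
      norm_num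
    rw [h1]
    exact kl_formula hd hVc hbound πd hZ hπd m₁ hs₁
  -- concavity of log
  have h_log : (1 - t) * Real.log s₀ + t * Real.log s₁ ≤ Real.log ((1 - t) * s₀ + t * s₁) := by
    have := (strictConcaveOn_log_Ioi.concaveOn).2 (Set.mem_Ioi.2 hs₀) (Set.mem_Ioi.2 hs₁)
      (by linarith : (0:ℝ) ≤ 1 - t) ht0 (by ring)
    simpa using this
  have hlogd : (d:ℝ) * ((1 - t) * Real.log s₀ + t * Real.log s₁)
      ≤ (d:ℝ) * Real.log ((1 - t) * s₀ + t * s₁) :=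
    mul_le_mul_of_nonneg_left h_log (Nat.cast_nonneg d)
  -- the potential-energy part
  set γ : EuclideanSpace ℝ (Fin d) → ℝ := fun z => Real.exp (-(1/2) * ‖z‖ ^ 2) with hγdef
  set a : EuclideanSpace ℝ (Fin d) := m₁ - m₀ with hadef
  set cδ : ℝ := s₁ - s₀ with hcddef
  have hγint : Integrable γ := integrable_gauss (by norm_num : (0:ℝ) < 1/2)
  have hγsq : Integrable (fun z : EuclideanSpace ℝ (Fin d) => γ z * ‖z‖ ^ 2) :=
    integrable_gauss_sq'
  have hγinner : Integrable (fun z : EuclideanSpace ℝ (Fin d) => γ z * ⟪a, z⟫) :=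
    integrable_gauss_inner_fun a
  have hIt : Integrable (fun z : EuclideanSpace ℝ (Fin d) =>
      γ z * V (((1 - t) • m₀ + t • m₁) + ((1 - t) * s₀ + t * s₁) • z)) :=
    integrable_gauss_poly_fun hVc hbound _ _
  have hI0 : Integrable (fun z : EuclideanSpace ℝ (Fin d) => γ z * V (m₀ + s₀ • z)) :=
    integrable_gauss_poly_fun hVc hbound _ _
  have hI1 : Integrable (fun z : EuclideanSpace ℝ (Fin d) => γ z * V (m₁ + s₁ • z)) :=
    integrable_gauss_poly_fun hVc hbound _ _
  have hexp_u : ∀ z : EuclideanSpace ℝ (Fin d), γ z * ‖a + cδ • z‖ ^ 2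
      = ‖a‖ ^ 2 * γ z + (2 * cδ) * (γ z * ⟪a, z⟫) + cδ ^ 2 * (γ z * ‖z‖ ^ 2) := by
    intro z
    have hn : ‖a + cδ • z‖ ^ 2 = ‖a‖ ^ 2 + 2 * (cδ * ⟪a, z⟫) + cδ ^ 2 * ‖z‖ ^ 2 := by
      rw [norm_add_sq_real, real_inner_smul_right, norm_smul, Real.norm_eq_abs, mul_pow, sq_abs]
    rw [hn]; ring
  have hIu : Integrable (fun z : EuclideanSpace ℝ (Fin d) => γ z * ‖a + cδ • z‖ ^ 2) := by
    refine (((hγint.const_mul (‖a‖^2)).add (hγinner.const_mul (2 * cδ))).add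
      (hγsq.const_mul (cδ^2))).congr (Filter.Eventually.of_forall fun z => (hexp_u z).symm)
  have hintu : ∫ z : EuclideanSpace ℝ (Fin d), γ z * ‖a + cδ • z‖ ^ 2
      = ‖a‖ ^ 2 * (2 * π) ^ ((d:ℝ)/2) + cδ ^ 2 * ((d:ℝ) * (2 * π) ^ ((d:ℝ)/2)) := by
    rw [integral_congr_ae (Filter.Eventually.of_forall hexp_u)]
    have e1 : (∫ z : EuclideanSpace ℝ (Fin d), (‖a‖^2 * γ z + (2 * cδ) * (γ z * ⟪a, z⟫)
          + cδ^2 * (γ z * ‖z‖^2)))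
        = (∫ z : EuclideanSpace ℝ (Fin d), (‖a‖^2 * γ z + (2 * cδ) * (γ z * ⟪a, z⟫)))
          + ∫ z : EuclideanSpace ℝ (Fin d), cδ^2 * (γ z * ‖z‖^2) :=
      integral_add ((hγint.const_mul (‖a‖^2)).add (hγinner.const_mul (2 * cδ)))
        (hγsq.const_mul (cδ^2))
    have e2 : (∫ z : EuclideanSpace ℝ (Fin d), (‖a‖^2 * γ z + (2 * cδ) * (γ z * ⟪a, z⟫)))
        = (∫ z : EuclideanSpace ℝ (Fin d), ‖a‖^2 * γ z)
          + ∫ z : EuclideanSpace ℝ (Fin d), (2 * cδ) * (γ z * ⟪a, z⟫) :=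
      integral_add (hγint.const_mul (‖a‖^2)) (hγinner.const_mul (2 * cδ))
    rw [e1, e2, integral_const_mul, integral_const_mul, integral_const_mul,
      integral_gauss_inner a, integral_gauss_val]
    have hsqv : ∫ z : EuclideanSpace ℝ (Fin d), γ z * ‖z‖ ^ 2
        = (d:ℝ) * (2 * π) ^ ((d:ℝ)/2) := by
      rw [show ∫ z : EuclideanSpace ℝ (Fin d), γ z * ‖z‖^2
          = ∫ z : EuclideanSpace ℝ (Fin d), ‖z‖^2 * γ z from
        integral_congr_ae (Filter.Eventually.of_forall fun z => mul_comm _ _),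
        integral_gauss_sq hd, integral_gauss_val]
    rw [hsqv]
    ring
  have hptG : ∀ z : EuclideanSpace ℝ (Fin d),
      γ z * V (((1 - t) • m₀ + t • m₁) + ((1 - t) * s₀ + t * s₁) • z)
        ≤ (1 - t) * (γ z * V (m₀ + s₀ • z)) + t * (γ z * V (m₁ + s₁ • z))
          - ((α/2) * t * (1 - t)) * (γ z * ‖a + cδ • z‖ ^ 2) := by
    intro z
    have hx : (m₀ + s₀ • z) + t • (a + cδ • z)
        = ((1 - t) • m₀ + t • m₁) + ((1 - t) * s₀ + t * s₁) • z := by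
      rw [hadef, hcddef]
      module
    have hx1 : (m₀ + s₀ • z) + (a + cδ • z) = m₁ + s₁ • z := by
      rw [hadef, hcddef]
      module
    have hsc := strong_convex hV hHess (m₀ + s₀ • z) (a + cδ • z) ht0 ht1
    rw [hx, hx1] at hsc
    have hγz : (0:ℝ) ≤ γ z := (Real.exp_pos _).le
    calc γ z * V (((1 - t) • m₀ + t • m₁) + ((1 - t) * s₀ + t * s₁) • z)
        ≤ γ z * ((1 - t) * V (m₀ + s₀ • z) + t * V (m₁ + s₁ • z)
            - (α/2) * t * (1 - t) * ‖a + cδ • z‖ ^ 2) := mul_le_mul_of_nonneg_left hsc hγz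
      _ = (1 - t) * (γ z * V (m₀ + s₀ • z)) + t * (γ z * V (m₁ + s₁ • z))
          - ((α/2) * t * (1 - t)) * (γ z * ‖a + cδ • z‖ ^ 2) := by ring
  have hGmono : (∫ z : EuclideanSpace ℝ (Fin d),
      γ z * V (((1 - t) • m₀ + t • m₁) + ((1 - t) * s₀ + t * s₁) • z))
      ≤ (1 - t) * (∫ z : EuclideanSpace ℝ (Fin d), γ z * V (m₀ + s₀ • z))
        + t * (∫ z : EuclideanSpace ℝ (Fin d), γ z * V (m₁ + s₁ • z))
        - ((α/2) * t * (1 - t)) * ∫ z : EuclideanSpace ℝ (Fin d), γ z * ‖a + cδ • z‖ ^ 2 := by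
    have hRint : Integrable (fun z : EuclideanSpace ℝ (Fin d) =>
        (1 - t) * (γ z * V (m₀ + s₀ • z)) + t * (γ z * V (m₁ + s₁ • z))
          - ((α/2) * t * (1 - t)) * (γ z * ‖a + cδ • z‖ ^ 2)) :=
      ((hI0.const_mul (1 - t)).add (hI1.const_mul t)).sub (hIu.const_mul _)
    have := integral_mono hIt hRint hptG
    calc (∫ z : EuclideanSpace ℝ (Fin d),
        γ z * V (((1 - t) • m₀ + t • m₁) + ((1 - t) * s₀ + t * s₁) • z)) ≤ _ := this
      _ = (1 - t) * (∫ z : EuclideanSpace ℝ (Fin d), γ z * V (m₀ + s₀ • z))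
        + t * (∫ z : EuclideanSpace ℝ (Fin d), γ z * V (m₁ + s₁ • z))
        - ((α/2) * t * (1 - t)) * ∫ z : EuclideanSpace ℝ (Fin d), γ z * ‖a + cδ • z‖ ^ 2 := by
          have eS : (∫ z : EuclideanSpace ℝ (Fin d),
                ((1 - t) * (γ z * V (m₀ + s₀ • z)) + t * (γ z * V (m₁ + s₁ • z))
                  - ((α/2) * t * (1 - t)) * (γ z * ‖a + cδ • z‖ ^ 2)))
              = (∫ z : EuclideanSpace ℝ (Fin d),
                  ((1 - t) * (γ z * V (m₀ + s₀ • z)) + t * (γ z * V (m₁ + s₁ • z))))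
                - ∫ z : EuclideanSpace ℝ (Fin d),
                    ((α/2) * t * (1 - t)) * (γ z * ‖a + cδ • z‖ ^ 2) :=
            integral_sub ((hI0.const_mul (1 - t)).add (hI1.const_mul t)) (hIu.const_mul _)
          have eA : (∫ z : EuclideanSpace ℝ (Fin d),
                ((1 - t) * (γ z * V (m₀ + s₀ • z)) + t * (γ z * V (m₁ + s₁ • z))))
              = (∫ z : EuclideanSpace ℝ (Fin d), (1 - t) * (γ z * V (m₀ + s₀ • z)))
                + ∫ z : EuclideanSpace ℝ (Fin d), t * (γ z * V (m₁ + s₁ • z)) :=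
            integral_add (hI0.const_mul (1 - t)) (hI1.const_mul t)
          rw [eS, eA, integral_const_mul, integral_const_mul, integral_const_mul]
  -- multiply by A and use the moments
  set A : ℝ := (2 * π) ^ (-(d:ℝ)/2) with hAdef
  have hA : 0 ≤ A := by rw [hAdef]; positivity
  have hAN : A * (2 * π) ^ ((d:ℝ)/2) = 1 := by
    rw [hAdef, ← Real.rpow_add (by positivity),
      show -(d:ℝ)/2 + (d:ℝ)/2 = 0 from by ring, Real.rpow_zero]
  have hnorm_a : ‖a‖ = ‖m₀ - m₁‖ := by rw [hadef, norm_sub_rev]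
  have hcd2 : cδ ^ 2 = (s₀ - s₁) ^ 2 := by rw [hcddef]; ring
  have hAu : A * ∫ z : EuclideanSpace ℝ (Fin d), γ z * ‖a + cδ • z‖ ^ 2
      = ‖m₀ - m₁‖ ^ 2 + (d:ℝ) * (s₀ - s₁) ^ 2 := by
    rw [hintu, ← hnorm_a, ← hcd2]
    linear_combination (‖a‖^2 + (d:ℝ) * cδ^2) * hAN
  have h_G : A * (∫ z : EuclideanSpace ℝ (Fin d),
      γ z * V (((1 - t) • m₀ + t • m₁) + ((1 - t) * s₀ + t * s₁) • z))
      ≤ (1 - t) * (A * ∫ z : EuclideanSpace ℝ (Fin d), γ z * V (m₀ + s₀ • z))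
        + t * (A * ∫ z : EuclideanSpace ℝ (Fin d), γ z * V (m₁ + s₁ • z))
        - ((α/2) * t * (1 - t)) * (‖m₀ - m₁‖ ^ 2 + (d:ℝ) * (s₀ - s₁) ^ 2) := by
    have := mul_le_mul_of_nonneg_left hGmono hA
    calc A * (∫ z : EuclideanSpace ℝ (Fin d),
        γ z * V (((1 - t) • m₀ + t • m₁) + ((1 - t) * s₀ + t * s₁) • z)) ≤ _ := this
      _ = (1 - t) * (A * ∫ z : EuclideanSpace ℝ (Fin d), γ z * V (m₀ + s₀ • z))
        + t * (A * ∫ z : EuclideanSpace ℝ (Fin d), γ z * V (m₁ + s₁ • z))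
        - ((α/2) * t * (1 - t)) * (A * ∫ z : EuclideanSpace ℝ (Fin d), γ z * ‖a + cδ • z‖ ^ 2) := by
          ring
      _ = (1 - t) * (A * ∫ z : EuclideanSpace ℝ (Fin d), γ z * V (m₀ + s₀ • z))
        + t * (A * ∫ z : EuclideanSpace ℝ (Fin d), γ z * V (m₁ + s₁ • z))
        - ((α/2) * t * (1 - t)) * (‖m₀ - m₁‖ ^ 2 + (d:ℝ) * (s₀ - s₁) ^ 2) := by
          rw [hAu]
  rw [hft, hf0, hf1]
  nlinarith [h_G, hlogd]
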